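/- Let G be a graph on 6 vertices with edges e_1={1,2}, e_2={1,3}, e_3={2,3}, e_4={1,4}, e_5={3,4}, e_6={1,5}, e_7={4,5}, e_8={2,6}, e_9={3,6}, e_10={5,6}. Then G is gap-free, and the binomial y_3 y_4 y_7 y_9 − y_5^2 y_6 y_8 belongs to the toric ideal I_G (under y_i ↦ M_{e_i}); in particular I_G contains an irreducible binomial one of whose monomials is not squarefree. -/

import Mathlib

open MvPolynomial

/-- A simple graph is gap-free if any two edges with no common vertex are
joined by at least one edge. -/
def GapFree {V : Type*} (G : SimpleGraph V) : Prop :=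
  ∀ v1 v2 w1 w2 : V, G.Adj v1 v2 → G.Adj w1 w2 →
    v1 ≠ w1 → v1 ≠ w2 → v2 ≠ w1 → v2 ≠ w2 →
    G.Adj v1 w1 ∨ G.Adj v1 w2 ∨ G.Adj v2 w1 ∨ G.Adj v2 w2

/-- The graph on vertices `1, …, 6` (here `0, …, 5`) with the ten edges
`e₁ = {1,2}, e₂ = {1,3}, e₃ = {2,3}, e₄ = {1,4}, e₅ = {3,4}, e₆ = {1,5}, e₇ = {4,5},
e₈ = {2,6}, e₉ = {3,6}, e₁₀ = {5,6}`. -/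
def exampleGraph : SimpleGraph (Fin 6) :=
  SimpleGraph.fromEdgeSet
    {s(0, 1), s(0, 2), s(1, 2), s(0, 3), s(2, 3), s(0, 4), s(3, 4),
      s(1, 5), s(2, 5), s(4, 5)}

/-- The edge monomials `M_{e₁}, …, M_{e₁₀}` of `exampleGraph`. -/
noncomputable def exampleEdgeMon (K : Type*) [Field K] :
    Fin 10 → MvPolynomial (Fin 6) K :=
  ![X 0 * X 1, X 0 * X 2, X 1 * X 2, X 0 * X 3, X 2 * X 3,
    X 0 * X 4, X 3 * X 4, X 1 * X 5, X 2 * X 5, X 4 * X 5]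

/-- The binomial `y₃ y₄ y₇ y₉ − y₅² y₆ y₈` (with 1-based indexing of the ten edge
variables). -/
noncomputable def exampleBinomial (K : Type*) [Field K] : MvPolynomial (Fin 10) K :=
  X 2 * X 3 * X 6 * X 8 - X 4 ^ 2 * X 5 * X 7


lemma irred_linear {R : Type*} [CommRing R] [IsDomain R] {a b : R} (ha : a ≠ 0)
    (hco : ∀ c : R, c ∣ a → c ∣ b → IsUnit c) :
    Irreducible (Polynomial.C a * Polynomial.X + Polynomial.C b) := by
  set f : Polynomial R := Polynomial.C a * Polynomial.X + Polynomial.C b with hf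
  have hdeg : f.degree = 1 := Polynomial.degree_linear ha
  have hnat : f.natDegree = 1 := Polynomial.natDegree_linear ha
  have hc1 : f.coeff 1 = a := by simp [hf]
  have hc0 : f.coeff 0 = b := by simp [hf]
  have hf0 : f ≠ 0 := fun h => by simp [h] at hdeg
  have key : ∀ g h : Polynomial R, f = g * h → g.natDegree = 0 → IsUnit g := by
    intro g h hgh hg0
    obtain ⟨c, rfl⟩ := Polynomial.natDegree_eq_zero.mp hg0
    refine Polynomial.isUnit_C.mpr (hco c ?_ ?_)
    · exact ⟨h.coeff 1, by rw [← hc1, hgh, Polynomial.coeff_C_mul]⟩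
    · exact ⟨h.coeff 0, by rw [← hc0, hgh, Polynomial.coeff_C_mul]⟩
  refine ⟨Polynomial.not_isUnit_of_degree_pos f (by rw [hdeg]; norm_num), ?_⟩
  intro g h hgh
  have hg : g ≠ 0 := fun h0 => hf0 (by simp [hgh, h0])
  have hh : h ≠ 0 := fun h0 => hf0 (by simp [hgh, h0])
  have hsum : g.natDegree + h.natDegree = 1 := by
    rw [← Polynomial.natDegree_mul hg hh, ← hgh, hnat]
  rcases Nat.eq_zero_or_pos g.natDegree with h0 | hpos
  · exact Or.inl (key g h hgh h0)
  · exact Or.inr (key h g (by rw [hgh, mul_comm]) (by omega))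

lemma prime_X_fin (K : Type*) [Field K] (n : ℕ) (i : Fin (n + 1)) :
    Prime (MvPolynomial.X i : MvPolynomial (Fin (n + 1)) K) := by
  rw [← MulEquiv.prime_iff (renameEquiv K (Equiv.swap i 0)).toMulEquiv]
  have : (renameEquiv K (Equiv.swap i 0)).toMulEquiv (MvPolynomial.X i)
      = (MvPolynomial.X 0 : MvPolynomial (Fin (n + 1)) K) := by
    simp [renameEquiv_apply, rename_X]
  rw [this, ← MulEquiv.prime_iff (MvPolynomial.finSuccEquiv K n).toMulEquiv]
  have : (MvPolynomial.finSuccEquiv K n).toMulEquiv (MvPolynomial.X 0)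
      = (Polynomial.X : Polynomial (MvPolynomial (Fin n) K)) := by
    simpa using MvPolynomial.finSuccEquiv_X_zero (R := K) (n := n)
  rw [this]
  exact Polynomial.prime_X

lemma coprime_aux (K : Type*) [Field K] (c : MvPolynomial (Fin 9) K)
    (hca : c ∣ MvPolynomial.X 2 * MvPolynomial.X 5 * MvPolynomial.X 7)
    (hcb : c ∣ -(MvPolynomial.X 3 ^ 2 * MvPolynomial.X 4 * MvPolynomial.X 6)) : IsUnit c := by
  by_contra hc
  have hc0 : c ≠ 0 := by
    rintro rfl
    have := zero_dvd_iff.mp hca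
    exact (MvPolynomial.X_ne_zero (2 : Fin 9)) (by
      have h5 := MvPolynomial.X_ne_zero (R := K) (5 : Fin 9)
      have h7 := MvPolynomial.X_ne_zero (R := K) (7 : Fin 9)
      rcases mul_eq_zero.mp this with h | h
      · rcases mul_eq_zero.mp h with h' | h'
        · exact h'
        · exact absurd h' h5
      · exact absurd h h7)
  obtain ⟨p, hpirr, hpc⟩ := WfDvdMonoid.exists_irreducible_factor hc hc0
  have hp : Prime p := (UniqueFactorizationMonoid.irreducible_iff_prime).mp hpirr
  have key : ∀ i j : Fin 9, p ∣ MvPolynomial.X i → p ∣ MvPolynomial.X j → i = j := by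
    intro i j hi hj
    have h1 := hpirr.associated_of_dvd (prime_X_fin K 8 i).irreducible hi
    have h2 := hpirr.associated_of_dvd (prime_X_fin K 8 j).irreducible hj
    exact MvPolynomial.X_dvd_X.mp (h1.symm.trans h2).dvd
  have hpa : p ∣ MvPolynomial.X 2 * MvPolynomial.X 5 * MvPolynomial.X 7 := hpc.trans hca
  have hpb : p ∣ MvPolynomial.X 3 ^ 2 * MvPolynomial.X 4 * MvPolynomial.X 6 :=
    (dvd_neg.mp (hpc.trans hcb))
  have ha : p ∣ MvPolynomial.X (2 : Fin 9) ∨ p ∣ MvPolynomial.X 5 ∨ p ∣ MvPolynomial.X 7 := by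
    rcases hp.dvd_mul.mp hpa with h | h
    · rcases hp.dvd_mul.mp h with h' | h'
      · exact Or.inl h'
      · exact Or.inr (Or.inl h')
    · exact Or.inr (Or.inr h)
  have hb : p ∣ MvPolynomial.X (3 : Fin 9) ∨ p ∣ MvPolynomial.X 4 ∨ p ∣ MvPolynomial.X 6 := by
    rcases hp.dvd_mul.mp hpb with h | h
    · rcases hp.dvd_mul.mp h with h' | h'
      · exact Or.inl (hp.dvd_of_dvd_pow h')
      · exact Or.inr (Or.inl h')
    · exact Or.inr (Or.inr h)
  rcases ha with h | h | h <;> rcases hb with h' | h' | h' <;>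
    exact absurd (key _ _ h h') (by decide)

set_option maxHeartbeats 2000000 in
set_option synthInstance.maxHeartbeats 400000 in
set_option synthInstance.maxSize 1024 in
lemma exampleGraph_gapFree : GapFree exampleGraph := by
  have hadj : ∀ a b : Fin 6, exampleGraph.Adj a b ↔
      ((a = 0 ∧ b = 1 ∨ a = 1 ∧ b = 0) ∨
        (a = 0 ∧ b = 2 ∨ a = 2 ∧ b = 0) ∨
        (a = 1 ∧ b = 2 ∨ a = 2 ∧ b = 1) ∨
        (a = 0 ∧ b = 3 ∨ a = 3 ∧ b = 0) ∨
        (a = 2 ∧ b = 3 ∨ a = 3 ∧ b = 2) ∨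
        (a = 0 ∧ b = 4 ∨ a = 4 ∧ b = 0) ∨
        (a = 3 ∧ b = 4 ∨ a = 4 ∧ b = 3) ∨
        (a = 1 ∧ b = 5 ∨ a = 5 ∧ b = 1) ∨
        (a = 2 ∧ b = 5 ∨ a = 5 ∧ b = 2) ∨ (a = 4 ∧ b = 5 ∨ a = 5 ∧ b = 4)) ∧ a ≠ b := by
    intro a b
    simp [exampleGraph, SimpleGraph.fromEdgeSet_adj, Sym2.eq_iff]
  intro v1 v2 w1 w2
  rw [hadj, hadj, hadj, hadj, hadj, hadj]
  revert v1 v2 w1 w2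
  decide

lemma exampleBinomial_irreducible (K : Type*) [Field K] : Irreducible (exampleBinomial K) := by
  refine (MulEquiv.irreducible_iff
    ((MvPolynomial.renameEquiv K (Equiv.swap (2 : Fin 10) 0)).trans
      (MvPolynomial.finSuccEquiv K 9)).toMulEquiv).mp ?_
  have himg : ((MvPolynomial.renameEquiv K (Equiv.swap (2 : Fin 10) 0)).trans
      (MvPolynomial.finSuccEquiv K 9)).toMulEquiv (exampleBinomial K)
      = Polynomial.C (MvPolynomial.X 2 * MvPolynomial.X 5 * MvPolynomial.X 7) * Polynomial.X
        + Polynomial.C (-(MvPolynomial.X 3 ^ 2 * MvPolynomial.X 4 * MvPolynomial.X 6)) := by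
    show (MvPolynomial.finSuccEquiv K 9)
        ((MvPolynomial.rename (Equiv.swap (2 : Fin 10) 0)) (exampleBinomial K)) = _
    have h1 : (MvPolynomial.rename (Equiv.swap (2 : Fin 10) 0)) (exampleBinomial K)
        = MvPolynomial.X 0 * MvPolynomial.X 3 * MvPolynomial.X 6 * MvPolynomial.X 8
          - MvPolynomial.X 4 ^ 2 * MvPolynomial.X 5 * MvPolynomial.X 7 := by
      simp [exampleBinomial, MvPolynomial.rename_X,
        show Equiv.swap (2 : Fin 10) 0 2 = 0 from by decide,
        show Equiv.swap (2 : Fin 10) 0 3 = 3 from by decide,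
        show Equiv.swap (2 : Fin 10) 0 4 = 4 from by decide,
        show Equiv.swap (2 : Fin 10) 0 5 = 5 from by decide,
        show Equiv.swap (2 : Fin 10) 0 6 = 6 from by decide,
        show Equiv.swap (2 : Fin 10) 0 7 = 7 from by decide,
        show Equiv.swap (2 : Fin 10) 0 8 = 8 from by decide]
    rw [h1]
    have hs : ∀ j : Fin 9, (MvPolynomial.finSuccEquiv K 9) (MvPolynomial.X j.succ)
        = Polynomial.C (MvPolynomial.X j) := fun j => MvPolynomial.finSuccEquiv_X_succ
    have e3 : (MvPolynomial.X (3 : Fin 10) : MvPolynomial (Fin 10) K)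
        = MvPolynomial.X ((2 : Fin 9).succ) := rfl
    have e4 : (MvPolynomial.X (4 : Fin 10) : MvPolynomial (Fin 10) K)
        = MvPolynomial.X ((3 : Fin 9).succ) := rfl
    have e5 : (MvPolynomial.X (5 : Fin 10) : MvPolynomial (Fin 10) K)
        = MvPolynomial.X ((4 : Fin 9).succ) := rfl
    have e6 : (MvPolynomial.X (6 : Fin 10) : MvPolynomial (Fin 10) K)
        = MvPolynomial.X ((5 : Fin 9).succ) := rfl
    have e7 : (MvPolynomial.X (7 : Fin 10) : MvPolynomial (Fin 10) K)
        = MvPolynomial.X ((6 : Fin 9).succ) := rfl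
    have e8 : (MvPolynomial.X (8 : Fin 10) : MvPolynomial (Fin 10) K)
        = MvPolynomial.X ((7 : Fin 9).succ) := rfl
    rw [map_sub, map_mul, map_mul, map_mul, map_mul, map_mul, map_pow,
      e3, e4, e5, e6, e7, e8, MvPolynomial.finSuccEquiv_X_zero, hs, hs, hs, hs, hs, hs]
    rw [map_mul, map_mul, map_neg, map_mul, map_mul, map_pow]
    ring
  rw [himg]
  exact irred_linear (by
      refine mul_ne_zero (mul_ne_zero ?_ ?_) ?_ <;> exact MvPolynomial.X_ne_zero _)
    (coprime_aux K)

/-- The graph above is gap-free, and the binomial `y₃ y₄ y₇ y₉ − y₅² y₆ y₈` lies in its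
toric ideal (the kernel of `yᵢ ↦ M_{eᵢ}`); moreover this binomial is irreducible and
one of its monomials is not squarefree.  Hence the toric ideal of a gap-free graph may
contain an irreducible binomial one of whose monomials is not squarefree. -/
theorem exampleGraph_nonsquarefree_circuit (K : Type*) [Field K] :
    GapFree exampleGraph ∧
    exampleBinomial K ∈
      RingHom.ker (MvPolynomial.aeval (exampleEdgeMon K)).toRingHom ∧
    Irreducible (exampleBinomial K) ∧
    ∃ d ∈ (exampleBinomial K).support, ∃ i : Fin 10, 2 ≤ d i := by
  refine ⟨exampleGraph_gapFree, ?_, exampleBinomial_irreducible K, ?_⟩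
  · simp only [RingHom.mem_ker, AlgHom.toRingHom_eq_coe, RingHom.coe_coe, exampleBinomial,
      map_sub, map_mul, map_pow, aeval_X]
    rw [show exampleEdgeMon K 2 = X 1 * X 2 from rfl,
      show exampleEdgeMon K 3 = X 0 * X 3 from rfl,
      show exampleEdgeMon K 6 = X 3 * X 4 from rfl,
      show exampleEdgeMon K 8 = X 2 * X 5 from rfl,
      show exampleEdgeMon K 4 = X 2 * X 3 from rfl,
      show exampleEdgeMon K 5 = X 0 * X 4 from rfl,
      show exampleEdgeMon K 7 = X 1 * X 5 from rfl]
    ring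
  · refine ⟨Finsupp.single 4 2 + Finsupp.single 5 1 + Finsupp.single 7 1, ?_, 4, by simp⟩
    rw [MvPolynomial.mem_support_iff, exampleBinomial]
    have h1 : (X 2 * X 3 * X 6 * X 8 : MvPolynomial (Fin 10) K)
        = monomial (Finsupp.single 2 1 + Finsupp.single 3 1
            + Finsupp.single 6 1 + Finsupp.single 8 1) 1 := by
      simp [X, monomial_mul]
    have h2 : (X 4 ^ 2 * X 5 * X 7 : MvPolynomial (Fin 10) K)
        = monomial (Finsupp.single 4 2 + Finsupp.single 5 1 + Finsupp.single 7 1) 1 := by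
      simp [X, monomial_mul, monomial_pow, Finsupp.smul_single]
    rw [h1, h2, coeff_sub, coeff_monomial, coeff_monomial, if_pos rfl,
      if_neg (by intro h; have := DFunLike.congr_fun h 4; simp at this)]
    simp
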